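/- Let a > 0 and b > 0 be real numbers, and define f, g : ℝ² → ℝ by f(x,y) = x·(x³ − y⁵)·((x³ − y⁵)³ − y¹⁷) and g(x,y) = x·(x³ + a·y⁵)·(x³ − y⁷)·(x⁶ + b·y¹⁰). Then the Fukui invariants are A(f) = {13} ∪ {n ∈ ℕ : n ≥ 22} ∪ {∞} and A(g) = {13, 23} ∪ {n ∈ ℕ : n ≥ 25} ∪ {∞}. In particular A(f) ≠ A(g). -/

import Mathlib

open Filter Topology

noncomputable section

/-- `h` has order of vanishing `n ∈ ℕ ∪ {∞}` at `0`. -/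
def HasOrderAtZero (h : ℝ → ℝ) (n : ℕ∞) : Prop :=
  (n = ⊤ ∧ ∀ᶠ t in 𝓝 (0 : ℝ), h t = 0) ∨
    (∃ s : ℕ, n = (s : ℕ∞) ∧ (∀ j < s, iteratedDeriv j h 0 = 0) ∧ iteratedDeriv s h 0 ≠ 0)

/-- The Fukui invariant of `f`: the set of orders `ord(f ∘ γ)` over all real analytic arcs
`γ : (ℝ,0) → (ℝ²,0)`. -/
def FukuiSet (f : ℝ × ℝ → ℝ) : Set ℕ∞ :=
  {n | ∃ γ : ℝ → ℝ × ℝ, AnalyticAt ℝ γ 0 ∧ γ 0 = 0 ∧ HasOrderAtZero (fun t => f (γ t)) n}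

def OrdRep (h : ℝ → ℝ) (n : ℕ∞) : Prop :=
  (n = ⊤ ∧ ∀ᶠ t in 𝓝 (0:ℝ), h t = 0) ∨
  ∃ (s : ℕ) (u : ℝ → ℝ), n = (s : ℕ∞) ∧ AnalyticAt ℝ u 0 ∧ u 0 ≠ 0 ∧
    ∀ᶠ t in 𝓝 (0:ℝ), h t = t ^ s * u t

lemma ordRep_congr {h h' : ℝ → ℝ} {n : ℕ∞} (he : ∀ᶠ t in 𝓝 (0:ℝ), h t = h' t)
    (ho : OrdRep h n) : OrdRep h' n := by
  rcases ho with ⟨hn, hev⟩ | ⟨s, u, hn, hu, hu0, hev⟩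
  · exact Or.inl ⟨hn, by filter_upwards [he, hev] with t h1 h2; rw [← h1, h2]⟩
  · exact Or.inr ⟨s, u, hn, hu, hu0, by filter_upwards [he, hev] with t h1 h2; rw [← h1, h2]⟩

lemma ordRep_id : OrdRep (fun t => t) 1 :=
  Or.inr ⟨1, fun _ => 1, rfl, analyticAt_const, one_ne_zero,
    Eventually.of_forall fun t => by ring⟩

lemma OrdRep.mulF {h₁ h₂ : ℝ → ℝ} {s₁ s₂ : ℕ} (o₁ : OrdRep h₁ s₁) (o₂ : OrdRep h₂ s₂) :
    OrdRep (fun t => h₁ t * h₂ t) ((s₁ + s₂ : ℕ) : ℕ∞) := by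
  rcases o₁ with ⟨hn, _⟩ | ⟨a, u, hn, hu, hu0, hev⟩
  · exact absurd hn (by simp)
  rcases o₂ with ⟨hn', _⟩ | ⟨b, v, hn', hv, hv0, hev'⟩
  · exact absurd hn' (by simp)
  have ha : a = s₁ := by exact_mod_cast hn.symm
  have hb : b = s₂ := by exact_mod_cast hn'.symm
  subst ha hb
  refine Or.inr ⟨a + b, fun t => u t * v t, rfl, hu.mul hv, mul_ne_zero hu0 hv0, ?_⟩
  filter_upwards [hev, hev'] with t h1 h2
  rw [h1, h2, pow_add]; ring

lemma OrdRep.elim_nat {h : ℝ → ℝ} {s : ℕ} (o : OrdRep h (s : ℕ∞)) :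
    ∃ u : ℝ → ℝ, AnalyticAt ℝ u 0 ∧ u 0 ≠ 0 ∧ ∀ᶠ t in 𝓝 (0:ℝ), h t = t ^ s * u t := by
  rcases o with ⟨hn, _⟩ | ⟨a, u, hn, hu, hu0, hev⟩
  · exact absurd hn (by simp)
  · have ha : a = s := by exact_mod_cast hn.symm
    subst ha; exact ⟨u, hu, hu0, hev⟩

lemma ordRep_of_rep {h u : ℝ → ℝ} {s : ℕ} (hu : AnalyticAt ℝ u 0) (hu0 : u 0 ≠ 0)
    (hev : ∀ᶠ t in 𝓝 (0:ℝ), h t = t ^ s * u t) : OrdRep h (s : ℕ∞) :=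
  Or.inr ⟨s, u, rfl, hu, hu0, hev⟩

lemma OrdRep.neg {h : ℝ → ℝ} {s : ℕ} (o : OrdRep h (s:ℕ∞)) :
    OrdRep (fun t => -(h t)) (s:ℕ∞) := by
  obtain ⟨u, hu, hu0, hev⟩ := o.elim_nat
  exact ordRep_of_rep (u := fun t => -u t) hu.neg (neg_ne_zero.mpr hu0)
    (by filter_upwards [hev] with t h1; rw [h1]; ring)

lemma OrdRep.const_mul {h : ℝ → ℝ} {s : ℕ} {c : ℝ} (hc : c ≠ 0) (o : OrdRep h (s:ℕ∞)) :
    OrdRep (fun t => c * h t) (s:ℕ∞) := by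
  obtain ⟨u, hu, hu0, hev⟩ := o.elim_nat
  exact ordRep_of_rep (analyticAt_const.mul hu) (mul_ne_zero hc hu0)
    (by filter_upwards [hev] with t h1; rw [h1]; simp only [Pi.mul_apply]; ring)

lemma OrdRep.pow {h : ℝ → ℝ} {s : ℕ} (o : OrdRep h (s:ℕ∞)) (k : ℕ) :
    OrdRep (fun t => h t ^ k) ((k * s : ℕ) : ℕ∞) := by
  induction k with
  | zero =>
      refine ordRep_of_rep (u := fun _ => 1) (s := 0 * s) analyticAt_const one_ne_zero ?_
      exact Eventually.of_forall fun t => by simp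
  | succ k ih =>
      have := ih.mulF o
      have harith : (k * s + s : ℕ) = ((k+1) * s : ℕ) := by ring
      rw [harith] at this
      exact ordRep_congr (Eventually.of_forall fun t => by ring_nf) this

lemma OrdRep.add_lt {h₁ h₂ : ℝ → ℝ} {s₁ s₂ : ℕ} (o₁ : OrdRep h₁ (s₁:ℕ∞)) (o₂ : OrdRep h₂ (s₂:ℕ∞))
    (hlt : s₁ < s₂) : OrdRep (fun t => h₁ t + h₂ t) (s₁:ℕ∞) := by
  obtain ⟨d, rfl⟩ : ∃ d, s₂ = s₁ + (d + 1) := ⟨s₂ - s₁ - 1, by omega⟩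
  obtain ⟨u, hu, hu0, hev⟩ := o₁.elim_nat
  obtain ⟨v, hv, hv0, hev'⟩ := o₂.elim_nat
  refine ordRep_of_rep (u := fun t => u t + t ^ (d + 1) * v t)
    (hu.add ((analyticAt_id.pow _).mul hv)) ?_ ?_
  · simpa [zero_pow] using hu0
  · filter_upwards [hev, hev'] with t h1 h2
    rw [h1, h2, pow_add]; ring

lemma OrdRep.add_top {h₁ h₂ : ℝ → ℝ} {n : ℕ∞} (o₁ : OrdRep h₁ n)
    (hev : ∀ᶠ t in 𝓝 (0:ℝ), h₂ t = 0) : OrdRep (fun t => h₁ t + h₂ t) n :=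
  ordRep_congr (by filter_upwards [hev] with t h2; rw [h2, add_zero]) o₁

lemma exists_ordRep {x : ℝ → ℝ} (hx : AnalyticAt ℝ x 0) :
    (∀ᶠ t in 𝓝 (0:ℝ), x t = 0) ∨ ∃ s : ℕ, OrdRep x (s:ℕ∞) := by
  by_cases hev : ∀ᶠ t in 𝓝 (0:ℝ), x t = 0
  · exact Or.inl hev
  · have : analyticOrderAt x 0 ≠ ⊤ := by rwa [ne_eq, analyticOrderAt_eq_top]
    obtain ⟨s, hs⟩ := WithTop.ne_top_iff_exists.mp this
    obtain ⟨g, hg, hg0, hgev⟩ := (hx.analyticOrderAt_eq_natCast (n := s)).mp hs.symm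
    refine Or.inr ⟨s, ordRep_of_rep hg hg0 ?_⟩
    filter_upwards [hgev] with t h1
    simpa [smul_eq_mul] using h1

lemma OrdRep.pos {x : ℝ → ℝ} {s : ℕ} (o : OrdRep x (s:ℕ∞)) (hx0 : x 0 = 0) : 1 ≤ s := by
  rcases Nat.eq_zero_or_pos s with rfl | h
  · obtain ⟨u, _, hu0, hev⟩ := o.elim_nat
    have := hev.self_of_nhds
    simp only [pow_zero, one_mul] at this
    exact absurd (by rw [← this, hx0]) hu0
  · exact h

lemma OrdRep.add_ge {h₁ h₂ : ℝ → ℝ} {s : ℕ} (o₁ : OrdRep h₁ (s:ℕ∞)) (o₂ : OrdRep h₂ (s:ℕ∞)) :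
    (∀ᶠ t in 𝓝 (0:ℝ), h₁ t + h₂ t = 0) ∨
      ∃ m : ℕ, s ≤ m ∧ OrdRep (fun t => h₁ t + h₂ t) (m:ℕ∞) := by
  obtain ⟨u, hu, hu0, hev⟩ := o₁.elim_nat
  obtain ⟨v, hv, hv0, hev'⟩ := o₂.elim_nat
  have hw : AnalyticAt ℝ (fun t => u t + v t) 0 := hu.add hv
  have hsum : ∀ᶠ t in 𝓝 (0:ℝ), h₁ t + h₂ t = t ^ s * (u t + v t) := by
    filter_upwards [hev, hev'] with t h1 h2; rw [h1, h2]; ring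
  rcases exists_ordRep hw with hz | ⟨j, hj⟩
  · left; filter_upwards [hsum, hz] with t h1 h2; rw [h1, h2, mul_zero]
  · right
    refine ⟨s + j, Nat.le_add_right _ _, ?_⟩
    have hts : OrdRep (fun t : ℝ => t ^ s) ((s * 1 : ℕ) : ℕ∞) := ordRep_id.pow s
    rw [mul_one] at hts
    have := hts.mulF hj
    exact ordRep_congr (by filter_upwards [hsum] with t h1; rw [← h1]) this

lemma OrdRep.sq_add_sq {h₁ h₂ : ℝ → ℝ} {s : ℕ} {b : ℝ} (hb : 0 < b)
    (o₁ : OrdRep h₁ (s:ℕ∞)) (o₂ : OrdRep h₂ (s:ℕ∞)) :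
    OrdRep (fun t => h₁ t ^ 2 + b * h₂ t ^ 2) ((2 * s : ℕ) : ℕ∞) := by
  obtain ⟨u, hu, hu0, hev⟩ := o₁.elim_nat
  obtain ⟨v, hv, hv0, hev'⟩ := o₂.elim_nat
  refine ordRep_of_rep (u := fun t => u t ^ 2 + b * v t ^ 2)
    ((hu.pow 2).add (analyticAt_const.mul (hv.pow 2))) ?_ ?_
  · positivity
  · filter_upwards [hev, hev'] with t h1 h2
    rw [h1, h2, pow_mul']; ring

lemma analyticAt_deriv {u : ℝ → ℝ} (hu : AnalyticAt ℝ u 0) : AnalyticAt ℝ (deriv u) 0 := by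
  obtain ⟨s, hs, h⟩ := hu.eventually_analyticAt.exists_mem
  exact AnalyticOnNhd.deriv h 0 (mem_of_mem_nhds hs)

lemma iteratedDeriv_zero_fun {j : ℕ} : iteratedDeriv j (fun _ : ℝ => (0:ℝ)) 0 = 0 := by
  induction j with
  | zero => simp
  | succ j ih =>
      rw [iteratedDeriv_succ']
      simpa [deriv_const'] using ih

lemma key_deriv {s : ℕ} : ∀ (h u : ℝ → ℝ), AnalyticAt ℝ u 0 →
    (∀ᶠ t in 𝓝 (0:ℝ), h t = t ^ s * u t) →
    (∀ j < s, iteratedDeriv j h 0 = 0) ∧ iteratedDeriv s h 0 = (Nat.factorial s : ℝ) * u 0 := by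
  induction s with
  | zero =>
      intro h u hu hev
      refine ⟨fun j hj => absurd hj (Nat.not_lt_zero j), ?_⟩
      have := hev.self_of_nhds
      simpa using this
  | succ s ih =>
      intro h u hu hev
      -- the derivative of h agrees near 0 with t ^ s * v t
      set v : ℝ → ℝ := fun t => (s+1 : ℝ) * u t + t * deriv u t with hv_def
      have hv : AnalyticAt ℝ v 0 :=
        (analyticAt_const.mul hu).add (analyticAt_id.mul (analyticAt_deriv hu))
      have hdev : ∀ᶠ t in 𝓝 (0:ℝ), deriv h t = t ^ s * v t := by
        have h1 : deriv h =ᶠ[𝓝 (0:ℝ)] deriv (fun t => t ^ (s+1) * u t) :=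
          Filter.EventuallyEq.deriv hev
        filter_upwards [h1, hu.eventually_analyticAt] with t ht hut
        rw [ht]
        have hdu : DifferentiableAt ℝ u t := hut.differentiableAt
        rw [deriv_fun_mul (by fun_prop) hdu]
        simp only [hv_def]
        rw [deriv_pow_field]
        push_cast
        ring
      obtain ⟨ihlt, ihs⟩ := ih (deriv h) v hv hdev
      have h00 : h 0 = 0 := by
        have := hev.self_of_nhds
        simpa using this
      constructor
      · intro j hj
        cases j with
        | zero => simpa using h00
        | succ j =>
            rw [iteratedDeriv_succ']
            exact ihlt j (by omega)
      · rw [iteratedDeriv_succ', ihs]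
        simp only [hv_def]
        rw [Nat.factorial_succ]
        push_cast
        ring

lemma OrdRep.hasOrder {h : ℝ → ℝ} {n : ℕ∞} (o : OrdRep h n) : HasOrderAtZero h n := by
  rcases o with ⟨hn, hev⟩ | ⟨s, u, hn, hu, hu0, hev⟩
  · exact Or.inl ⟨hn, hev⟩
  · obtain ⟨h1, h2⟩ := key_deriv h u hu hev
    refine Or.inr ⟨s, hn, h1, ?_⟩
    rw [h2]
    exact mul_ne_zero (by exact_mod_cast Nat.factorial_ne_zero s) hu0

lemma hasOrder_unique {h : ℝ → ℝ} {n m : ℕ∞} (h1 : HasOrderAtZero h n)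
    (h2 : HasOrderAtZero h m) : n = m := by
  rcases h1 with ⟨hn, hev⟩ | ⟨s, hn, hlt, hs⟩
  · rcases h2 with ⟨hm, _⟩ | ⟨s', hm, _, hs'⟩
    · rw [hn, hm]
    · exfalso
      apply hs'
      have : iteratedDeriv s' h 0 = iteratedDeriv s' (fun _ : ℝ => (0:ℝ)) 0 :=
        Filter.EventuallyEq.iteratedDeriv_eq s' hev
      rw [this, iteratedDeriv_zero_fun]
  · rcases h2 with ⟨hm, hev⟩ | ⟨s', hm, hlt', hs'⟩
    · exfalso
      apply hs
      have : iteratedDeriv s h 0 = iteratedDeriv s (fun _ : ℝ => (0:ℝ)) 0 :=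
        Filter.EventuallyEq.iteratedDeriv_eq s hev
      rw [this, iteratedDeriv_zero_fun]
    · rw [hn, hm]
      norm_cast
      rcases Nat.lt_trichotomy s s' with hc | hc | hc
      · exact absurd (hlt' s hc) hs
      · exact hc
      · exact absurd (hlt s' hc) hs'

lemma ordRep_top_of_ev {h : ℝ → ℝ} (hev : ∀ᶠ t in 𝓝 (0:ℝ), h t = 0) : OrdRep h ⊤ :=
  Or.inl ⟨rfl, hev⟩

lemma OrdRep.sub_lt {h₁ h₂ : ℝ → ℝ} {s₁ s₂ : ℕ} (o₁ : OrdRep h₁ (s₁:ℕ∞)) (o₂ : OrdRep h₂ (s₂:ℕ∞))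
    (hlt : s₁ < s₂) : OrdRep (fun t => h₁ t - h₂ t) (s₁:ℕ∞) := by
  have := o₁.add_lt o₂.neg hlt
  exact ordRep_congr (Eventually.of_forall fun t => by ring) this

lemma OrdRep.sub_gt {h₁ h₂ : ℝ → ℝ} {s₁ s₂ : ℕ} (o₁ : OrdRep h₁ (s₁:ℕ∞)) (o₂ : OrdRep h₂ (s₂:ℕ∞))
    (hlt : s₂ < s₁) : OrdRep (fun t => h₁ t - h₂ t) (s₂:ℕ∞) := by
  have := (o₂.neg).add_lt o₁ hlt
  exact ordRep_congr (Eventually.of_forall fun t => by ring) this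

lemma OrdRep.sub_ge {h₁ h₂ : ℝ → ℝ} {s : ℕ} (o₁ : OrdRep h₁ (s:ℕ∞)) (o₂ : OrdRep h₂ (s:ℕ∞)) :
    (∀ᶠ t in 𝓝 (0:ℝ), h₁ t - h₂ t = 0) ∨
      ∃ m : ℕ, s ≤ m ∧ OrdRep (fun t => h₁ t - h₂ t) (m:ℕ∞) := by
  rcases o₁.add_ge o₂.neg with hz | ⟨m, hm, o⟩
  · left; filter_upwards [hz] with t h1; linarith [h1]
  · right
    exact ⟨m, hm, ordRep_congr (Eventually.of_forall fun t => by ring) o⟩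

lemma main_f {x y : ℝ → ℝ} (hx : AnalyticAt ℝ x 0) (hy : AnalyticAt ℝ y 0)
    (hx0 : x 0 = 0) (hy0 : y 0 = 0) :
    ∃ N : ℕ∞, OrdRep (fun t => x t * (x t ^ 3 - y t ^ 5) *
        ((x t ^ 3 - y t ^ 5) ^ 3 - y t ^ 17)) N ∧
      (N = 13 ∨ N = ⊤ ∨ ∃ s : ℕ, 22 ≤ s ∧ N = (s:ℕ∞)) := by
  rcases exists_ordRep hx with hxz | ⟨p, hp⟩
  · refine ⟨⊤, ordRep_top_of_ev ?_, Or.inr (Or.inl rfl)⟩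
    filter_upwards [hxz] with t ht; rw [ht]; ring
  have hp1 : 1 ≤ p := hp.pos hx0
  rcases exists_ordRep hy with hyz | ⟨q, hq⟩
  · -- y eventually zero : order 13 p
    have h13 : OrdRep (fun t => x t ^ 13) ((13 * p : ℕ):ℕ∞) := hp.pow 13
    refine ⟨((13 * p : ℕ):ℕ∞), ordRep_congr ?_ h13, ?_⟩
    · filter_upwards [hyz] with t ht; rw [ht]; ring
    · rcases eq_or_lt_of_le hp1 with h1 | h2
      · left; rw [← h1]; norm_num
      · right; right; exact ⟨13 * p, by omega, rfl⟩
  have hq1 : 1 ≤ q := hq.pos hy0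
  have oX3 : OrdRep (fun t => x t ^ 3) ((3 * p : ℕ):ℕ∞) := hp.pow 3
  have oY5 : OrdRep (fun t => y t ^ 5) ((5 * q : ℕ):ℕ∞) := hq.pow 5
  have oY17 : OrdRep (fun t => y t ^ 17) ((17 * q : ℕ):ℕ∞) := hq.pow 17
  rcases Nat.lt_trichotomy (3 * p) (5 * q) with hc | hc | hc
  · -- 3p < 5q : N = 13 p
    have oU : OrdRep (fun t => x t ^ 3 - y t ^ 5) ((3 * p : ℕ):ℕ∞) := oX3.sub_lt oY5 hc
    have oU3 : OrdRep (fun t => (x t ^ 3 - y t ^ 5) ^ 3) ((3 * (3 * p) : ℕ):ℕ∞) := oU.pow 3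
    have oV : OrdRep (fun t => (x t ^ 3 - y t ^ 5) ^ 3 - y t ^ 17) ((3 * (3 * p) : ℕ):ℕ∞) :=
      oU3.sub_lt oY17 (by omega)
    have oN := (hp.mulF oU).mulF oV
    refine ⟨_, oN, ?_⟩
    rcases eq_or_lt_of_le hp1 with h1 | h2
    · left; rw [← h1]; norm_num
    · right; right; exact ⟨_, by omega, rfl⟩
  · -- 3p = 5q
    rw [← hc] at oY5
    rcases oX3.sub_ge oY5 with hz | ⟨m, hm, oU⟩
    · refine ⟨⊤, ordRep_top_of_ev ?_, Or.inr (Or.inl rfl)⟩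
      filter_upwards [hz] with t ht; rw [ht]; ring
    have oU3 : OrdRep (fun t => (x t ^ 3 - y t ^ 5) ^ 3) ((3 * m : ℕ):ℕ∞) := oU.pow 3
    rcases Nat.lt_trichotomy (3 * m) (17 * q) with hd | hd | hd
    · have oV := oU3.sub_lt oY17 hd
      have oN := (hp.mulF oU).mulF oV
      exact ⟨_, oN, Or.inr (Or.inr ⟨_, by omega, rfl⟩)⟩
    · rw [← hd] at oY17
      rcases oU3.sub_ge oY17 with hz | ⟨r, hr, oV⟩
      · refine ⟨⊤, ordRep_top_of_ev ?_, Or.inr (Or.inl rfl)⟩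
        filter_upwards [hz] with t ht; rw [ht]; ring
      · have oN := (hp.mulF oU).mulF oV
        exact ⟨_, oN, Or.inr (Or.inr ⟨_, by omega, rfl⟩)⟩
    · have oV := oU3.sub_gt oY17 hd
      have oN := (hp.mulF oU).mulF oV
      exact ⟨_, oN, Or.inr (Or.inr ⟨_, by omega, rfl⟩)⟩
  · -- 3p > 5q : N = p + 20 q
    have oU : OrdRep (fun t => x t ^ 3 - y t ^ 5) ((5 * q : ℕ):ℕ∞) := oX3.sub_gt oY5 hc
    have oU3 : OrdRep (fun t => (x t ^ 3 - y t ^ 5) ^ 3) ((3 * (5 * q) : ℕ):ℕ∞) := oU.pow 3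
    have oV : OrdRep (fun t => (x t ^ 3 - y t ^ 5) ^ 3 - y t ^ 17) ((3 * (5 * q) : ℕ):ℕ∞) :=
      oU3.sub_lt oY17 (by omega)
    have oN := (hp.mulF oU).mulF oV
    exact ⟨_, oN, Or.inr (Or.inr ⟨_, by omega, rfl⟩)⟩

lemma main_g {a b : ℝ} (ha : 0 < a) (hb : 0 < b) {x y : ℝ → ℝ}
    (hx : AnalyticAt ℝ x 0) (hy : AnalyticAt ℝ y 0) (hx0 : x 0 = 0) (hy0 : y 0 = 0) :
    ∃ N : ℕ∞, OrdRep (fun t => x t * (x t ^ 3 + a * y t ^ 5) * (x t ^ 3 - y t ^ 7) *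
        (x t ^ 6 + b * y t ^ 10)) N ∧
      (N = 13 ∨ N = 23 ∨ N = ⊤ ∨ ∃ s : ℕ, 25 ≤ s ∧ N = (s:ℕ∞)) := by
  rcases exists_ordRep hx with hxz | ⟨p, hp⟩
  · refine ⟨⊤, ordRep_top_of_ev ?_, Or.inr (Or.inr (Or.inl rfl))⟩
    filter_upwards [hxz] with t ht; rw [ht]; ring
  have hp1 : 1 ≤ p := hp.pos hx0
  rcases exists_ordRep hy with hyz | ⟨q, hq⟩
  · have h13 : OrdRep (fun t => x t ^ 13) ((13 * p : ℕ):ℕ∞) := hp.pow 13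
    refine ⟨((13 * p : ℕ):ℕ∞), ordRep_congr ?_ h13, ?_⟩
    · filter_upwards [hyz] with t ht; rw [ht]; ring
    · rcases eq_or_lt_of_le hp1 with h1 | h2
      · left; rw [← h1]; norm_num
      · right; right; right; exact ⟨13 * p, by omega, rfl⟩
  have hq1 : 1 ≤ q := hq.pos hy0
  have oX3 : OrdRep (fun t => x t ^ 3) ((3 * p : ℕ):ℕ∞) := hp.pow 3
  have oX6 : OrdRep (fun t => x t ^ 6) ((6 * p : ℕ):ℕ∞) := hp.pow 6
  have oY5 : OrdRep (fun t => y t ^ 5) ((5 * q : ℕ):ℕ∞) := hq.pow 5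
  have oY7 : OrdRep (fun t => y t ^ 7) ((7 * q : ℕ):ℕ∞) := hq.pow 7
  have oaY5 : OrdRep (fun t => a * y t ^ 5) ((5 * q : ℕ):ℕ∞) := oY5.const_mul ha.ne'
  have obY10 : OrdRep (fun t => b * y t ^ 10) ((10 * q : ℕ):ℕ∞) := (hq.pow 10).const_mul hb.ne'
  rcases Nat.lt_trichotomy (3 * p) (5 * q) with hc | hc | hc
  · -- 3p < 5q : N = 13 p
    have oA : OrdRep (fun t => x t ^ 3 + a * y t ^ 5) ((3 * p : ℕ):ℕ∞) := oX3.add_lt oaY5 hc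
    have oB : OrdRep (fun t => x t ^ 3 - y t ^ 7) ((3 * p : ℕ):ℕ∞) := oX3.sub_lt oY7 (by omega)
    have oC : OrdRep (fun t => x t ^ 6 + b * y t ^ 10) ((6 * p : ℕ):ℕ∞) :=
      oX6.add_lt obY10 (by omega)
    have oN := ((hp.mulF oA).mulF oB).mulF oC
    refine ⟨_, oN, ?_⟩
    rcases eq_or_lt_of_le hp1 with h1 | h2
    · left; rw [← h1]; norm_num
    · right; right; right; exact ⟨_, by omega, rfl⟩
  · -- 3p = 5q
    have hp2 : 2 ≤ p := by omega
    rw [← hc] at oaY5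
    have oB : OrdRep (fun t => x t ^ 3 - y t ^ 7) ((3 * p : ℕ):ℕ∞) :=
      oX3.sub_lt oY7 (by omega)
    have oC : OrdRep (fun t => x t ^ 6 + b * y t ^ 10) ((2 * (3 * p) : ℕ):ℕ∞) := by
      have h5 : OrdRep (fun t => y t ^ 5) ((3 * p : ℕ):ℕ∞) := by rw [hc]; exact oY5
      have := OrdRep.sq_add_sq hb oX3 h5
      exact ordRep_congr (Eventually.of_forall fun t => by ring) this
    rcases oX3.add_ge oaY5 with hz | ⟨m, hm, oA⟩
    · refine ⟨⊤, ordRep_top_of_ev ?_, Or.inr (Or.inr (Or.inl rfl))⟩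
      filter_upwards [hz] with t ht; rw [ht]; ring
    · have oN := ((hp.mulF oA).mulF oB).mulF oC
      exact ⟨_, oN, Or.inr (Or.inr (Or.inr ⟨_, by omega, rfl⟩))⟩
  · -- 3p > 5q
    have oA : OrdRep (fun t => x t ^ 3 + a * y t ^ 5) ((5 * q : ℕ):ℕ∞) := by
      have := oaY5.add_lt oX3 hc
      exact ordRep_congr (Eventually.of_forall fun t => by ring) this
    have oC : OrdRep (fun t => x t ^ 6 + b * y t ^ 10) ((10 * q : ℕ):ℕ∞) := by
      have := obY10.add_lt oX6 (by omega)
      exact ordRep_congr (Eventually.of_forall fun t => by ring) this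
    rcases Nat.lt_trichotomy (3 * p) (7 * q) with hd | hd | hd
    · have oB : OrdRep (fun t => x t ^ 3 - y t ^ 7) ((3 * p : ℕ):ℕ∞) := oX3.sub_lt oY7 hd
      have oN := ((hp.mulF oA).mulF oB).mulF oC
      refine ⟨_, oN, ?_⟩
      have : p + 5 * q + 3 * p + 10 * q = 23 ∨ 25 ≤ p + 5 * q + 3 * p + 10 * q := by omega
      rcases this with h23 | h25
      · right; left
        have : (p + 5 * q + 3 * p + 10 * q : ℕ) = (23:ℕ) := h23
        exact_mod_cast congrArg (Nat.cast : ℕ → ℕ∞) this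
      · right; right; right; exact ⟨_, by omega, rfl⟩
    · rw [← hd] at oY7
      rcases oX3.sub_ge oY7 with hz | ⟨m, hm, oB⟩
      · refine ⟨⊤, ordRep_top_of_ev ?_, Or.inr (Or.inr (Or.inl rfl))⟩
        filter_upwards [hz] with t ht; rw [ht]; ring
      · have oN := ((hp.mulF oA).mulF oB).mulF oC
        exact ⟨_, oN, Or.inr (Or.inr (Or.inr ⟨_, by omega, rfl⟩))⟩
    · have oB : OrdRep (fun t => x t ^ 3 - y t ^ 7) ((7 * q : ℕ):ℕ∞) := oX3.sub_gt oY7 hd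
      have oN := ((hp.mulF oA).mulF oB).mulF oC
      exact ⟨_, oN, Or.inr (Or.inr (Or.inr ⟨_, by omega, rfl⟩))⟩

/-! ### Reverse arcs -/

lemma rev13_f : OrdRep (fun t : ℝ => t * (t ^ 3 - t ^ 5) * ((t ^ 3 - t ^ 5) ^ 3 - t ^ 17))
    ((13:ℕ):ℕ∞) := by
  refine ordRep_of_rep (u := fun t => (1 - t ^ 2) * ((1 - t ^ 2) ^ 3 - t ^ 8)) ?_ (by norm_num)
    (Eventually.of_forall fun t => by ring)
  exact (analyticAt_const.sub (analyticAt_id.pow 2)).mul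
    (((analyticAt_const.sub (analyticAt_id.pow 2)).pow 3).sub (analyticAt_id.pow 8))

lemma rev_f (p : ℕ) (hp2 : 2 ≤ p) :
    OrdRep (fun t : ℝ => t ^ p * ((t ^ p) ^ 3 - t ^ 5) * (((t ^ p) ^ 3 - t ^ 5) ^ 3 - t ^ 17))
      ((p + 20 : ℕ):ℕ∞) := by
  have hid : OrdRep (fun t : ℝ => t) ((1:ℕ):ℕ∞) := by
    exact_mod_cast ordRep_id
  have hx : OrdRep (fun t : ℝ => t ^ p) ((p * 1 : ℕ):ℕ∞) := hid.pow p
  have oX3 : OrdRep (fun t : ℝ => (t ^ p) ^ 3) ((3 * (p * 1) : ℕ):ℕ∞) := hx.pow 3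
  have oY5 : OrdRep (fun t : ℝ => t ^ 5) ((5 * 1 : ℕ):ℕ∞) := hid.pow 5
  have oY17 : OrdRep (fun t : ℝ => t ^ 17) ((17 * 1 : ℕ):ℕ∞) := hid.pow 17
  have oU : OrdRep (fun t : ℝ => (t ^ p) ^ 3 - t ^ 5) ((5 * 1 : ℕ):ℕ∞) :=
    oX3.sub_gt oY5 (by omega)
  have oU3 : OrdRep (fun t : ℝ => ((t ^ p) ^ 3 - t ^ 5) ^ 3) ((3 * (5 * 1) : ℕ):ℕ∞) := oU.pow 3
  have oV : OrdRep (fun t : ℝ => ((t ^ p) ^ 3 - t ^ 5) ^ 3 - t ^ 17) ((3 * (5 * 1) : ℕ):ℕ∞) :=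
    oU3.sub_lt oY17 (by omega)
  have oN := (hx.mulF oU).mulF oV
  have he : (p * 1 + 5 * 1 + 3 * (5 * 1) : ℕ) = p + 20 := by omega
  rwa [he] at oN

lemma rev13_g {a b : ℝ} (ha : 0 < a) (hb : 0 < b) :
    OrdRep (fun t : ℝ => t * (t ^ 3 + a * t ^ 5) * (t ^ 3 - t ^ 7) * (t ^ 6 + b * t ^ 10))
      ((13:ℕ):ℕ∞) := by
  refine ordRep_of_rep (u := fun t => (1 + a * t ^ 2) * (1 - t ^ 4) * (1 + b * t ^ 4)) ?_
    (by norm_num) (Eventually.of_forall fun t => by ring)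
  exact ((analyticAt_const.add (analyticAt_const.mul (analyticAt_id.pow 2))).mul
    (analyticAt_const.sub (analyticAt_id.pow 4))).mul
    (analyticAt_const.add (analyticAt_const.mul (analyticAt_id.pow 4)))

lemma rev23_g {a b : ℝ} (ha : 0 < a) (hb : 0 < b) :
    OrdRep (fun t : ℝ => t ^ 2 * ((t ^ 2) ^ 3 + a * t ^ 5) * ((t ^ 2) ^ 3 - t ^ 7) *
      ((t ^ 2) ^ 6 + b * t ^ 10)) ((23:ℕ):ℕ∞) := by
  refine ordRep_of_rep (u := fun t => (t + a) * (1 - t) * (t ^ 2 + b)) ?_ ?_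
    (Eventually.of_forall fun t => by ring)
  · exact ((analyticAt_id.add analyticAt_const).mul
      (analyticAt_const.sub analyticAt_id)).mul ((analyticAt_id.pow 2).add analyticAt_const)
  · simp only [ne_eq]
    norm_num
    exact ⟨ha.ne', hb.ne'⟩

lemma rev_g {a b : ℝ} (ha : 0 < a) (hb : 0 < b) (p : ℕ) (hp3 : 3 ≤ p) :
    OrdRep (fun t : ℝ => t ^ p * ((t ^ p) ^ 3 + a * t ^ 5) * ((t ^ p) ^ 3 - t ^ 7) *
      ((t ^ p) ^ 6 + b * t ^ 10)) ((p + 22 : ℕ):ℕ∞) := by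
  have hid : OrdRep (fun t : ℝ => t) ((1:ℕ):ℕ∞) := by exact_mod_cast ordRep_id
  have hx : OrdRep (fun t : ℝ => t ^ p) ((p * 1 : ℕ):ℕ∞) := hid.pow p
  have oX3 : OrdRep (fun t : ℝ => (t ^ p) ^ 3) ((3 * (p * 1) : ℕ):ℕ∞) := hx.pow 3
  have oX6 : OrdRep (fun t : ℝ => (t ^ p) ^ 6) ((6 * (p * 1) : ℕ):ℕ∞) := hx.pow 6
  have oaY5 : OrdRep (fun t : ℝ => a * t ^ 5) ((5 * 1 : ℕ):ℕ∞) := (hid.pow 5).const_mul ha.ne'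
  have oY7 : OrdRep (fun t : ℝ => t ^ 7) ((7 * 1 : ℕ):ℕ∞) := hid.pow 7
  have obY10 : OrdRep (fun t : ℝ => b * t ^ 10) ((10 * 1 : ℕ):ℕ∞) := (hid.pow 10).const_mul hb.ne'
  have oA : OrdRep (fun t : ℝ => (t ^ p) ^ 3 + a * t ^ 5) ((5 * 1 : ℕ):ℕ∞) := by
    have := oaY5.add_lt oX3 (by omega)
    exact ordRep_congr (Eventually.of_forall fun t => by ring) this
  have oB : OrdRep (fun t : ℝ => (t ^ p) ^ 3 - t ^ 7) ((7 * 1 : ℕ):ℕ∞) :=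
    oX3.sub_gt oY7 (by omega)
  have oC : OrdRep (fun t : ℝ => (t ^ p) ^ 6 + b * t ^ 10) ((10 * 1 : ℕ):ℕ∞) := by
    have := obY10.add_lt oX6 (by omega)
    exact ordRep_congr (Eventually.of_forall fun t => by ring) this
  have oN := ((hx.mulF oA).mulF oB).mulF oC
  have he : (p * 1 + 5 * 1 + 7 * 1 + 10 * 1 : ℕ) = p + 22 := by omega
  rwa [he] at oN

/-! ### Main theorem -/

theorem stmt15 (a b : ℝ) (ha : 0 < a) (hb : 0 < b) (f g : ℝ × ℝ → ℝ)
    (hf : ∀ p : ℝ × ℝ,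
      f p = p.1 * (p.1 ^ 3 - p.2 ^ 5) * ((p.1 ^ 3 - p.2 ^ 5) ^ 3 - p.2 ^ 17))
    (hg : ∀ p : ℝ × ℝ,
      g p = p.1 * (p.1 ^ 3 + a * p.2 ^ 5) * (p.1 ^ 3 - p.2 ^ 7) * (p.1 ^ 6 + b * p.2 ^ 10)) :
    FukuiSet f = {n : ℕ∞ | n = 13 ∨ n = ⊤ ∨ ∃ s : ℕ, 22 ≤ s ∧ n = (s : ℕ∞)} ∧
    FukuiSet g = {n : ℕ∞ | n = 13 ∨ n = 23 ∨ n = ⊤ ∨ ∃ s : ℕ, 25 ≤ s ∧ n = (s : ℕ∞)} ∧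
    FukuiSet f ≠ FukuiSet g := by
  have hSf : FukuiSet f = {n : ℕ∞ | n = 13 ∨ n = ⊤ ∨ ∃ s : ℕ, 22 ≤ s ∧ n = (s : ℕ∞)} := by
    ext n
    simp only [FukuiSet, Set.mem_setOf_eq]
    constructor
    · rintro ⟨γ, hγ, hγ0, hord⟩
      have hx : AnalyticAt ℝ (fun t => (γ t).1) 0 := analyticAt_fst.comp hγ
      have hy : AnalyticAt ℝ (fun t => (γ t).2) 0 := analyticAt_snd.comp hγ
      have hx0 : (γ 0).1 = 0 := by rw [hγ0]; rfl
      have hy0 : (γ 0).2 = 0 := by rw [hγ0]; rfl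
      obtain ⟨N, oN, hmem⟩ := main_f hx hy hx0 hy0
      have heq : (fun t => f (γ t)) = (fun t => (γ t).1 * ((γ t).1 ^ 3 - (γ t).2 ^ 5) *
          (((γ t).1 ^ 3 - (γ t).2 ^ 5) ^ 3 - (γ t).2 ^ 17)) := funext fun t => hf (γ t)
      rw [heq] at hord
      have := hasOrder_unique hord oN.hasOrder
      rw [this]
      exact hmem
    · rintro (h13 | htop | ⟨s, hs22, rfl⟩)
      · refine ⟨fun t => (t, t), analyticAt_id.prod analyticAt_id, rfl, ?_⟩
        have heq : (fun t => f ((t : ℝ), t)) =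
            (fun t : ℝ => t * (t ^ 3 - t ^ 5) * ((t ^ 3 - t ^ 5) ^ 3 - t ^ 17)) :=
          funext fun t => hf (t, t)
        rw [heq, h13]
        have := rev13_f.hasOrder
        exact_mod_cast this
      · refine ⟨fun _ => 0, analyticAt_const, rfl, ?_⟩
        rw [htop]
        refine Or.inl ⟨rfl, Eventually.of_forall fun t => ?_⟩
        show f 0 = 0
        rw [hf]
        simp
      · refine ⟨fun t => (t ^ (s - 20), t), (analyticAt_id.pow _).prod analyticAt_id,
          by simp [zero_pow (show s - 20 ≠ 0 by omega)], ?_⟩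
        have heq : (fun t => f ((t : ℝ) ^ (s - 20), t)) = (fun t : ℝ =>
            t ^ (s - 20) * ((t ^ (s - 20)) ^ 3 - t ^ 5) *
              (((t ^ (s - 20)) ^ 3 - t ^ 5) ^ 3 - t ^ 17)) := funext fun t => hf _
        rw [heq]
        have := (rev_f (s - 20) (by omega)).hasOrder
        have he : (s - 20 + 20 : ℕ) = s := by omega
        rwa [he] at this
  have hSg : FukuiSet g = {n : ℕ∞ | n = 13 ∨ n = 23 ∨ n = ⊤ ∨ ∃ s : ℕ, 25 ≤ s ∧ n = (s : ℕ∞)} := by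
    ext n
    simp only [FukuiSet, Set.mem_setOf_eq]
    constructor
    · rintro ⟨γ, hγ, hγ0, hord⟩
      have hx : AnalyticAt ℝ (fun t => (γ t).1) 0 := analyticAt_fst.comp hγ
      have hy : AnalyticAt ℝ (fun t => (γ t).2) 0 := analyticAt_snd.comp hγ
      have hx0 : (γ 0).1 = 0 := by rw [hγ0]; rfl
      have hy0 : (γ 0).2 = 0 := by rw [hγ0]; rfl
      obtain ⟨N, oN, hmem⟩ := main_g ha hb hx hy hx0 hy0
      have heq : (fun t => g (γ t)) = (fun t => (γ t).1 * ((γ t).1 ^ 3 + a * (γ t).2 ^ 5) *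
          ((γ t).1 ^ 3 - (γ t).2 ^ 7) * ((γ t).1 ^ 6 + b * (γ t).2 ^ 10)) :=
        funext fun t => hg (γ t)
      rw [heq] at hord
      have := hasOrder_unique hord oN.hasOrder
      rw [this]
      exact hmem
    · rintro (h13 | h23 | htop | ⟨s, hs25, rfl⟩)
      · refine ⟨fun t => (t, t), analyticAt_id.prod analyticAt_id, rfl, ?_⟩
        have heq : (fun t => g ((t : ℝ), t)) = (fun t : ℝ =>
            t * (t ^ 3 + a * t ^ 5) * (t ^ 3 - t ^ 7) * (t ^ 6 + b * t ^ 10)) :=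
          funext fun t => hg (t, t)
        rw [heq, h13]
        exact_mod_cast (rev13_g ha hb).hasOrder
      · refine ⟨fun t => (t ^ 2, t), (analyticAt_id.pow _).prod analyticAt_id, by simp, ?_⟩
        have heq : (fun t => g ((t : ℝ) ^ 2, t)) = (fun t : ℝ =>
            t ^ 2 * ((t ^ 2) ^ 3 + a * t ^ 5) * ((t ^ 2) ^ 3 - t ^ 7) *
              ((t ^ 2) ^ 6 + b * t ^ 10)) := funext fun t => hg _
        rw [heq, h23]
        exact_mod_cast (rev23_g ha hb).hasOrder
      · refine ⟨fun _ => 0, analyticAt_const, rfl, ?_⟩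
        rw [htop]
        refine Or.inl ⟨rfl, Eventually.of_forall fun t => ?_⟩
        show g 0 = 0
        rw [hg]
        simp
      · refine ⟨fun t => (t ^ (s - 22), t), (analyticAt_id.pow _).prod analyticAt_id,
          by simp [zero_pow (show s - 22 ≠ 0 by omega)], ?_⟩
        have heq : (fun t => g ((t : ℝ) ^ (s - 22), t)) = (fun t : ℝ =>
            t ^ (s - 22) * ((t ^ (s - 22)) ^ 3 + a * t ^ 5) * ((t ^ (s - 22)) ^ 3 - t ^ 7) *
              ((t ^ (s - 22)) ^ 6 + b * t ^ 10)) := funext fun t => hg _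
        rw [heq]
        have := (rev_g ha hb (s - 22) (by omega)).hasOrder
        have he : (s - 22 + 22 : ℕ) = s := by omega
        rwa [he] at this
  refine ⟨hSf, hSg, ?_⟩
  rw [hSf, hSg]
  intro hcontra
  have h22 : (22 : ℕ∞) ∈ {n : ℕ∞ | n = 13 ∨ n = ⊤ ∨ ∃ s : ℕ, 22 ≤ s ∧ n = (s : ℕ∞)} :=
    Or.inr (Or.inr ⟨22, le_refl _, by norm_cast⟩)
  rw [hcontra] at h22
  rcases h22 with h | h | h | ⟨s, hs, h⟩
  · exact absurd h (by decide)
  · exact absurd h (by decide)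
  · exact absurd h (by decide)
  · have : (22 : ℕ) = s := by exact_mod_cast h
    omega
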